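/- arXiv:1512.00699 — 2 statements merged into one kernel-verified Lean document; each statement's English description precedes it below -/
import Mathlib

section
/- Let T > 0 and C₁, C₂ ≥ 0. Let w, r, k, h : ℝ × [0,T] → ℝ be functions, 2π-periodic in the first variable, with: w continuous and everywhere positive, continuously differentiable in t, satisfying ∂w/∂t = (−r − k²)·w; r continuous with |r| ≤ C₂; k continuous with 0 ≤ k ≤ h; and h continuous, nonnegative, continuously differentiable in t, twice continuously differentiable in x, satisfying the differential inequality ∂h/∂t (x,t) ≤ (1/w)·∂/∂x((1/w)·∂h/∂x)(x,t) + k(x,t)³ + C₁·(h(x,t) + 1). Then the functions Θ(t) = ∫₀^{2π} h(x,t)·w(x,t) dx and L(t) = ∫₀^{2π} w(x,t) dx satisfy Θ'(t) ≤ (C₁ + C₂)·Θ(t) + C₁·L(t) for all t ∈ [0,T]. -/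
open Set Real

/-- Second inequality of the corrected Lemma 19.9: with `w > 0` evolving by
`∂w/∂t = (−r − k²)·w`, `|r| ≤ C₂`, `0 ≤ k ≤ h`, and `h` satisfying the corrected
inequality (19.8) `∂h/∂t ≤ (1/w)·∂/∂x((1/w)·∂h/∂x) + k³ + C₁(h+1)` (the right-hand
side being `h'' + k³ + C₁(h+1)` in arc-length derivatives), the ε-modified total
curvature `Θ(t) = ∫₀^{2π} h·w dx` and length `L(t) = ∫₀^{2π} w dx` satisfy
`Θ'(t) ≤ (C₁+C₂)·Θ(t) + C₁·L(t)`. -/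
theorem total_curvature_evolution_inequality (T C₁ C₂ : ℝ) (hT : 0 < T)
    (hC₁ : 0 ≤ C₁) (hC₂ : 0 ≤ C₂)
    (w r k h wt ht hx hxx : ℝ → ℝ → ℝ)
    (hw_per : ∀ x t, w (x + 2 * π) t = w x t)
    (hr_per : ∀ x t, r (x + 2 * π) t = r x t)
    (hk_per : ∀ x t, k (x + 2 * π) t = k x t)
    (hh_per : ∀ x t, h (x + 2 * π) t = h x t)
    (hw_cont : ContinuousOn (fun p : ℝ × ℝ => w p.1 p.2) (univ ×ˢ Icc 0 T))
    (hw_pos : ∀ x, ∀ t ∈ Icc (0:ℝ) T, 0 < w x t)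
    (hwt : ∀ x, ∀ t ∈ Icc (0:ℝ) T, HasDerivWithinAt (w x) (wt x t) (Icc 0 T) t)
    (hwt_cont : ContinuousOn (fun p : ℝ × ℝ => wt p.1 p.2) (univ ×ˢ Icc 0 T))
    (hwevol : ∀ x, ∀ t ∈ Icc (0:ℝ) T, wt x t = (-(r x t) - (k x t) ^ 2) * w x t)
    (hr_cont : ContinuousOn (fun p : ℝ × ℝ => r p.1 p.2) (univ ×ˢ Icc 0 T))
    (hrbound : ∀ x, ∀ t ∈ Icc (0:ℝ) T, |r x t| ≤ C₂)
    (hk_cont : ContinuousOn (fun p : ℝ × ℝ => k p.1 p.2) (univ ×ˢ Icc 0 T))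
    (hk_nonneg : ∀ x, ∀ t ∈ Icc (0:ℝ) T, 0 ≤ k x t)
    (hkh : ∀ x, ∀ t ∈ Icc (0:ℝ) T, k x t ≤ h x t)
    (hh_cont : ContinuousOn (fun p : ℝ × ℝ => h p.1 p.2) (univ ×ˢ Icc 0 T))
    (hh_nonneg : ∀ x, ∀ t ∈ Icc (0:ℝ) T, 0 ≤ h x t)
    (hht : ∀ x, ∀ t ∈ Icc (0:ℝ) T, HasDerivWithinAt (h x) (ht x t) (Icc 0 T) t)
    (hht_cont : ContinuousOn (fun p : ℝ × ℝ => ht p.1 p.2) (univ ×ˢ Icc 0 T))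
    (hhx : ∀ t ∈ Icc (0:ℝ) T, ∀ x, HasDerivAt (fun x => h x t) (hx x t) x)
    (hhxx : ∀ t ∈ Icc (0:ℝ) T, ∀ x,
      HasDerivAt (fun x => (1 / w x t) * hx x t) (hxx x t) x)
    (hhx_cont : ContinuousOn (fun p : ℝ × ℝ => hx p.1 p.2) (univ ×ˢ Icc 0 T))
    (hhxx_cont : ContinuousOn (fun p : ℝ × ℝ => hxx p.1 p.2) (univ ×ˢ Icc 0 T))
    (hineq : ∀ x, ∀ t ∈ Icc (0:ℝ) T,
      ht x t ≤ (1 / w x t) * hxx x t + (k x t) ^ 3 + C₁ * (h x t + 1)) :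
    ∀ t ∈ Icc (0:ℝ) T, ∃ Θ't : ℝ,
      HasDerivWithinAt (fun t => ∫ x in (0:ℝ)..(2 * π), h x t * w x t) Θ't (Icc 0 T) t ∧
      Θ't ≤ (C₁ + C₂) * (∫ x in (0:ℝ)..(2 * π), h x t * w x t) +
        C₁ * ∫ x in (0:ℝ)..(2 * π), w x t := by
  intro t₀ ht₀
  have hπ : (0:ℝ) ≤ 2 * π := by positivity
  have hT' : (0:ℝ) ≤ T := hT.le
  -- clamp into [0, T]
  set cl : ℝ → ℝ := fun s => max 0 (min s T) with hcldef
  have cl_cont : Continuous cl := continuous_const.max (continuous_id.min continuous_const)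
  have cl_mem : ∀ s, cl s ∈ Icc (0:ℝ) T := fun s =>
    ⟨le_max_left _ _, max_le hT' (min_le_right _ _)⟩
  have cl_eq : ∀ s ∈ Icc (0:ℝ) T, cl s = s := by
    intro s hs
    simp only [hcldef]
    rw [min_eq_left hs.2, max_eq_right hs.1]
  -- slices of jointly continuous functions
  have sliceX : ∀ {f : ℝ → ℝ → ℝ},
      ContinuousOn (fun p : ℝ × ℝ => f p.1 p.2) (univ ×ˢ Icc 0 T) →
      ∀ s ∈ Icc (0:ℝ) T, Continuous fun x => f x s := by
    intro f hf s hs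
    rw [← continuousOn_univ]
    exact hf.comp (continuous_id.prodMk continuous_const).continuousOn
      (fun x _ => mk_mem_prod (mem_univ x) hs)
  set G : ℝ → ℝ → ℝ := fun x s => ht x s * w x s + h x s * wt x s with hGdef
  have hG_cont : ContinuousOn (fun p : ℝ × ℝ => G p.1 p.2) (univ ×ˢ Icc 0 T) :=
    (hht_cont.mul hw_cont).add (hh_cont.mul hwt_cont)
  set Gc : ℝ → ℝ → ℝ := fun x s => G x (cl s) with hGcdef
  have hGc_cont : Continuous fun p : ℝ × ℝ => Gc p.1 p.2 := by
    have hc : Continuous fun p : ℝ × ℝ => (p.1, cl p.2) :=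
      continuous_fst.prodMk (cl_cont.comp continuous_snd)
    exact hG_cont.comp_continuous hc (fun p => mk_mem_prod (mem_univ _) (cl_mem _))
  have hGc_eq : ∀ x, ∀ s ∈ Icc (0:ℝ) T, Gc x s = G x s := by
    intro x s hs
    simp only [hGcdef, cl_eq s hs]
  set F : ℝ → ℝ := fun s => ∫ x in (0:ℝ)..(2*π), Gc x s with hFdef
  have hF_cont : Continuous F := by
    have h1 : Continuous (Function.uncurry fun s x => Gc x s) := by
      rw [Function.uncurry_def]
      exact hGc_cont.comp (continuous_snd.prodMk continuous_fst)
    exact intervalIntegral.continuous_parametric_intervalIntegral_of_continuous' h1 0 (2*π)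
  -- FTC in time for each x
  have hFTCt : ∀ x, ∀ t ∈ Icc (0:ℝ) T,
      (∫ s in (0:ℝ)..t, Gc x s) = h x t * w x t - h x 0 * w x 0 := by
    intro x t htT
    have h0t : Icc (0:ℝ) t ⊆ Icc 0 T := Icc_subset_Icc le_rfl htT.2
    have hder : ∀ s ∈ Icc (0:ℝ) T,
        HasDerivWithinAt (fun s => h x s * w x s) (G x s) (Icc 0 T) s :=
      fun s hs => (hht x s hs).mul (hwt x s hs)
    have hcGx : Continuous fun s => Gc x s :=
      hGc_cont.comp (continuous_const.prodMk continuous_id)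
    refine intervalIntegral.integral_eq_sub_of_hasDeriv_right_of_le htT.1
      (fun s hs => ((hder s (h0t hs)).continuousWithinAt).mono h0t)
      (fun s hs => ?_) (hcGx.intervalIntegrable 0 t)
    have hsT : s ∈ Icc (0:ℝ) T := ⟨hs.1.le, hs.2.le.trans htT.2⟩
    rw [hGc_eq x s hsT]
    refine (hder s hsT).mono_of_mem_nhdsWithin ?_
    rw [mem_nhdsWithin]
    exact ⟨Iio T, isOpen_Iio, lt_of_lt_of_le hs.2 htT.2,
      fun y hy => ⟨(hs.1.trans hy.2).le, hy.1.le⟩⟩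
  -- representation of Θ
  have key : ∀ t ∈ Icc (0:ℝ) T,
      (∫ x in (0:ℝ)..(2*π), h x t * w x t)
        = (∫ x in (0:ℝ)..(2*π), h x 0 * w x 0) + ∫ s in (0:ℝ)..t, F s := by
    intro t htT
    have hswap : (∫ x in (0:ℝ)..(2*π), ∫ s in (0:ℝ)..t, Gc x s)
        = ∫ s in (0:ℝ)..t, F s := by
      simp only [hFdef]
      rw [intervalIntegral.integral_of_le hπ, intervalIntegral.integral_of_le htT.1]
      simp_rw [intervalIntegral.integral_of_le htT.1, intervalIntegral.integral_of_le hπ]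
      refine MeasureTheory.integral_integral_swap ?_
      rw [MeasureTheory.Measure.prod_restrict, ← MeasureTheory.Measure.volume_eq_prod]
      exact (hGc_cont.continuousOn.integrableOn_compact
        (isCompact_Icc.prod isCompact_Icc)).mono_set
        (prod_mono Ioc_subset_Icc_self Ioc_subset_Icc_self)
    calc (∫ x in (0:ℝ)..(2*π), h x t * w x t)
        = ∫ x in (0:ℝ)..(2*π), (h x 0 * w x 0 + ∫ s in (0:ℝ)..t, Gc x s) := by
          refine intervalIntegral.integral_congr fun x _ => ?_
          have := hFTCt x t htT; linarith
      _ = (∫ x in (0:ℝ)..(2*π), h x 0 * w x 0)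
          + ∫ x in (0:ℝ)..(2*π), ∫ s in (0:ℝ)..t, Gc x s := by
          refine intervalIntegral.integral_add ?_ ?_
          · exact ((sliceX hh_cont 0 ⟨le_rfl, hT'⟩).mul
              (sliceX hw_cont 0 ⟨le_rfl, hT'⟩)).intervalIntegrable _ _
          · have h1 : Continuous (Function.uncurry Gc) := by
              rw [Function.uncurry_def]; exact hGc_cont
            exact (intervalIntegral.continuous_parametric_intervalIntegral_of_continuous'
              h1 0 t).intervalIntegrable _ _
      _ = _ := by rw [hswap]
  -- the derivative
  have hΘderiv : HasDerivWithinAt (fun t => ∫ x in (0:ℝ)..(2*π), h x t * w x t)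
      (F t₀) (Icc 0 T) t₀ := by
    have hP : HasDerivAt
        (fun u => (∫ x in (0:ℝ)..(2*π), h x 0 * w x 0) + ∫ s in (0:ℝ)..u, F s)
        (F t₀) t₀ :=
      HasDerivAt.const_add _ (hF_cont.integral_hasStrictDerivAt 0 t₀).hasDerivAt
    exact hP.hasDerivWithinAt.congr (fun u hu => key u hu) (key t₀ ht₀)
  refine ⟨F t₀, hΘderiv, ?_⟩
  have hFt₀ : F t₀ = ∫ x in (0:ℝ)..(2*π), G x t₀ :=
    intervalIntegral.integral_congr fun x _ => hGc_eq x t₀ ht₀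
  rw [hFt₀]
  -- continuity of slices at t₀
  have cw := sliceX hw_cont t₀ ht₀
  have cht := sliceX hht_cont t₀ ht₀
  have cwt := sliceX hwt_cont t₀ ht₀
  have ch := sliceX hh_cont t₀ ht₀
  have chxx := sliceX hhxx_cont t₀ ht₀
  have cG : Continuous fun x => G x t₀ := (cht.mul cw).add (ch.mul cwt)
  -- pointwise bound
  have hpt : ∀ x, G x t₀ ≤ hxx x t₀ + ((C₁ + C₂) * h x t₀ + C₁) * w x t₀ := by
    intro x
    have hw0 := hw_pos x t₀ ht₀
    have h1 := hineq x t₀ ht₀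
    have h2 := hwevol x t₀ ht₀
    have hk0 := hk_nonneg x t₀ ht₀
    have hkh' := hkh x t₀ ht₀
    have hh0 := hh_nonneg x t₀ ht₀
    have hr' := hrbound x t₀ ht₀
    have habs : -C₂ ≤ r x t₀ := (abs_le.1 hr').1
    have hne : w x t₀ ≠ 0 := ne_of_gt hw0
    have e : (1 / w x t₀ * hxx x t₀ + (k x t₀)^3 + C₁*(h x t₀ + 1)) * w x t₀
        = hxx x t₀ + ((k x t₀)^3 + C₁*(h x t₀ + 1)) * w x t₀ := by
      field_simp; ring
    have hmul : ht x t₀ * w x t₀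
        ≤ hxx x t₀ + ((k x t₀)^3 + C₁*(h x t₀ + 1)) * w x t₀ := by
      have := mul_le_mul_of_nonneg_right h1 hw0.le
      rw [e] at this
      exact this
    have f1 : (k x t₀)^3 - h x t₀ * (k x t₀)^2 ≤ 0 := by nlinarith [sq_nonneg (k x t₀)]
    have f2 : h x t₀ * (-(r x t₀)) - C₂ * h x t₀ ≤ 0 := by nlinarith
    have f3 : ((k x t₀)^3 - h x t₀ * (k x t₀)^2) * w x t₀ ≤ 0 :=
      mul_nonpos_of_nonpos_of_nonneg f1 hw0.le
    have f4 : (h x t₀ * (-(r x t₀)) - C₂ * h x t₀) * w x t₀ ≤ 0 :=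
      mul_nonpos_of_nonpos_of_nonneg f2 hw0.le
    have hGx : G x t₀ = ht x t₀ * w x t₀ + h x t₀ * ((-(r x t₀) - (k x t₀)^2) * w x t₀) := by
      simp only [hGdef]; rw [h2]
    rw [hGx]
    nlinarith [hmul, f3, f4]
  -- integral comparison
  have cRHS : Continuous fun x => hxx x t₀ + ((C₁ + C₂) * h x t₀ + C₁) * w x t₀ :=
    chxx.add (((continuous_const.mul ch).add continuous_const).mul cw)
  have hle := intervalIntegral.integral_mono_on (μ := MeasureTheory.volume) hπ (cG.intervalIntegrable _ _)
    (cRHS.intervalIntegrable _ _) (fun x _ => hpt x)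
  -- the hxx integral vanishes by periodicity
  have hzero : (∫ x in (0:ℝ)..(2*π), hxx x t₀) = 0 := by
    have hFTC := intervalIntegral.integral_eq_sub_of_hasDerivAt
      (a := (0:ℝ)) (b := 2*π)
      (f := fun x => 1 / w x t₀ * hx x t₀) (f' := fun x => hxx x t₀)
      (fun x _ => hhxx t₀ ht₀ x) (chxx.intervalIntegrable _ _)
    rw [hFTC]
    have hxper : hx (2*π) t₀ = hx 0 t₀ := by
      have h1 := (hhx t₀ ht₀ (0 + 2*π)).comp 0 ((hasDerivAt_id 0).add_const (2*π))
      simp only [Function.comp_def, id_eq] at h1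
      have hfun : (fun y => h (y + 2*π) t₀) = fun y => h y t₀ :=
        funext fun y => hh_per y t₀
      rw [hfun] at h1
      have h4 := h1.unique (hhx t₀ ht₀ 0)
      simpa using h4
    have hwper : w (2*π) t₀ = w 0 t₀ := by
      have := hw_per 0 t₀
      rwa [zero_add] at this
    show 1 / w (2*π) t₀ * hx (2*π) t₀ - 1 / w 0 t₀ * hx 0 t₀ = 0
    rw [hxper, hwper]
    ring
  -- split the RHS integral
  have erw : ∀ x, ((C₁ + C₂) * h x t₀ + C₁) * w x t₀
      = (C₁ + C₂) * (h x t₀ * w x t₀) + C₁ * w x t₀ := fun x => by ring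
  have hsplit : (∫ x in (0:ℝ)..(2*π), (hxx x t₀ + ((C₁ + C₂) * h x t₀ + C₁) * w x t₀))
      = (∫ x in (0:ℝ)..(2*π), hxx x t₀)
        + ((C₁ + C₂) * (∫ x in (0:ℝ)..(2*π), h x t₀ * w x t₀)
          + C₁ * ∫ x in (0:ℝ)..(2*π), w x t₀) := by
    rw [intervalIntegral.integral_add (chxx.intervalIntegrable _ _)
      ((show Continuous fun x => ((C₁ + C₂) * h x t₀ + C₁) * w x t₀ from
        ((continuous_const.mul ch).add continuous_const).mul cw).intervalIntegrable _ _)]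
    congr 1
    simp_rw [erw]
    rw [intervalIntegral.integral_add
      ((show Continuous fun x => (C₁ + C₂) * (h x t₀ * w x t₀) from
        continuous_const.mul (ch.mul cw)).intervalIntegrable _ _)
      ((show Continuous fun x => C₁ * w x t₀ from
        continuous_const.mul cw).intervalIntegrable _ _),
      intervalIntegral.integral_const_mul, intervalIntegral.integral_const_mul]
  rw [hsplit, hzero] at hle
  linarith
end

section
/- Let t₀ < t₁, C' ≥ 0, and let f : ℝ × [t₀,t₁] → ℝ be a function that is 2π-periodic in the first variable, continuous on ℝ × [t₀,t₁], continuously differentiable in t, twice continuously differentiable in x, and let b : ℝ × [t₀,t₁] → ℝ be continuous. Suppose that f satisfies the parabolic differential inequality ∂f/∂t (x,t) ≤ ∂²f/∂x² (x,t) + b(x,t)·∂f/∂x (x,t) + C'·(f(x,t) + 1) for all (x,t). Then for all t ∈ [t₀,t₁], max_{x} f(x,t) + 1 ≤ (max_{x} f(x,t₀) + 1)·exp(C'·(t − t₀)). -/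
open Set Real

open Filter Topology

lemma aux_max_second (g g1 : ℝ → ℝ) (a c : ℝ)
    (hg : ∀ x, HasDerivAt g (g1 x) x) (hg1 : HasDerivAt g1 c a)
    (hmax : ∀ x, g x ≤ g a) : g1 a = 0 ∧ c ≤ 0 := by
  have h0 : g1 a = 0 :=
    IsLocalMax.hasDerivAt_eq_zero (Filter.Eventually.of_forall hmax) (hg a)
  refine ⟨h0, ?_⟩
  by_contra hc
  push_neg at hc
  have hslope : Tendsto (slope g1 a) (𝓝[≠] a) (𝓝 c) :=
    hasDerivAt_iff_tendsto_slope.1 hg1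
  have hslope' : Tendsto (slope g1 a) (𝓝[>] a) (𝓝 c) :=
    hslope.mono_left (nhdsWithin_mono a (fun x hx => ne_of_gt hx))
  have hev : ∀ᶠ x in 𝓝[>] a, 0 < slope g1 a x :=
    hslope'.eventually (lt_mem_nhds hc)
  obtain ⟨u, hu, hsub⟩ := mem_nhdsGT_iff_exists_Ioo_subset.1 hev
  have hau : a < u := hu
  have hpos : ∀ x ∈ Ioo a u, 0 < g1 x := by
    intro x hx
    have h1 : 0 < slope g1 a x := hsub hx
    rw [slope_def_field, h0, sub_zero] at h1
    have hxa : 0 < x - a := by linarith [hx.1]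
    have := mul_pos h1 hxa
    rwa [div_mul_cancel₀] at this
    exact ne_of_gt hxa
  have hmono : StrictMonoOn g (Icc a u) := by
    apply strictMonoOn_of_deriv_pos (convex_Icc a u)
    · exact fun x _ => (hg x).continuousAt.continuousWithinAt
    · intro x hx
      rw [interior_Icc] at hx
      rw [(hg x).deriv]
      exact hpos x hx
  have h2 : g a < g ((a + u) / 2) := by
    apply hmono (left_mem_Icc.2 hau.le) ⟨by linarith, by linarith⟩ (by linarith)
  exact absurd (hmax ((a + u) / 2)) (not_le.2 h2)

/-- Maximum-principle step in the corrected proof of Lemma 19.14: if `f` is `2π`-periodic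
in `x`, `C¹` in `t`, `C²` in `x`, and satisfies the parabolic inequality
`∂f/∂t ≤ ∂²f/∂x² + b·∂f/∂x + C'·(f+1)` with `b` continuous, then
`max_x f(x,t) + 1 ≤ (max_x f(x,t₀) + 1)·exp(C'·(t − t₀))` for all `t ∈ [t₀,t₁]`. -/
theorem maximum_principle_exponential_bound (t₀ t₁ C' : ℝ) (ht : t₀ < t₁) (hC' : 0 ≤ C')
    (f b ft fx fxx : ℝ → ℝ → ℝ)
    (hf_per : ∀ x t, f (x + 2 * π) t = f x t)
    (hf_cont : ContinuousOn (fun p : ℝ × ℝ => f p.1 p.2) (univ ×ˢ Icc t₀ t₁))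
    (hb_cont : ContinuousOn (fun p : ℝ × ℝ => b p.1 p.2) (univ ×ˢ Icc t₀ t₁))
    (hft : ∀ x, ∀ t ∈ Icc t₀ t₁, HasDerivWithinAt (f x) (ft x t) (Icc t₀ t₁) t)
    (hft_cont : ContinuousOn (fun p : ℝ × ℝ => ft p.1 p.2) (univ ×ˢ Icc t₀ t₁))
    (hfx : ∀ t ∈ Icc t₀ t₁, ∀ x, HasDerivAt (fun x => f x t) (fx x t) x)
    (hfxx : ∀ t ∈ Icc t₀ t₁, ∀ x, HasDerivAt (fun x => fx x t) (fxx x t) x)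
    (hfx_cont : ContinuousOn (fun p : ℝ × ℝ => fx p.1 p.2) (univ ×ˢ Icc t₀ t₁))
    (hfxx_cont : ContinuousOn (fun p : ℝ × ℝ => fxx p.1 p.2) (univ ×ˢ Icc t₀ t₁))
    (hineq : ∀ x, ∀ t ∈ Icc t₀ t₁,
      ft x t ≤ fxx x t + b x t * fx x t + C' * (f x t + 1)) :
    ∀ t ∈ Icc t₀ t₁,
      (⨆ x, f x t) + 1 ≤ ((⨆ x, f x t₀) + 1) * Real.exp (C' * (t - t₀)) := by
  have hπ : (0:ℝ) < 2 * π := by positivity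
  -- periodicity
  have hper : ∀ t, Function.Periodic (fun x => f x t) (2 * π) := fun t x => hf_per x t
  -- argmax in x for each time in Icc
  have argmax : ∀ t ∈ Icc t₀ t₁, ∃ x', x' ∈ Icc 0 (2 * π) ∧ ∀ y, f y t ≤ f x' t := by
    intro t htI
    have hcx : Continuous fun x => f x t :=
      continuous_iff_continuousAt.2 fun x => (hfx t htI x).continuousAt
    obtain ⟨x', hx'mem, hx'max⟩ :=
      isCompact_Icc.exists_isMaxOn (α := ℝ) ⟨0, left_mem_Icc.2 hπ.le⟩ hcx.continuousOn
    refine ⟨x', hx'mem, fun y => ?_⟩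
    obtain ⟨y₀, hy₀, hy⟩ := (hper t).exists_mem_Ico₀ hπ y
    rw [hy]
    exact hx'max (Ico_subset_Icc_self hy₀)
  set A : ℝ := (⨆ x, f x t₀) + 1 with hA
  obtain ⟨x₀', hx₀'mem, hx₀'max⟩ := argmax t₀ (left_mem_Icc.2 ht.le)
  have hbdd : BddAbove (Set.range fun x => f x t₀) := by
    refine ⟨f x₀' t₀, ?_⟩
    rintro _ ⟨y, rfl⟩
    exact hx₀'max y
  have hiSup_t₀ : (⨆ x, f x t₀) = f x₀' t₀ :=
    le_antisymm (ciSup_le hx₀'max) (le_ciSup hbdd x₀')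
  -- the key claim
  have key : ∀ ε : ℝ, 0 < ε → ∀ s ∈ Icc t₀ t₁, ∀ x,
      f x s < A * Real.exp (C' * (s - t₀)) + ε * Real.exp ((C' + 1) * (s - t₀)) - 1 := by
    intro ε hε
    set φ : ℝ → ℝ :=
      fun s => A * Real.exp (C' * (s - t₀)) + ε * Real.exp ((C' + 1) * (s - t₀)) - 1 with hφ
    set D : ℝ → ℝ :=
      fun s => A * (Real.exp (C' * (s - t₀)) * C') + ε * (Real.exp ((C' + 1) * (s - t₀)) * (C' + 1))
      with hD
    have hφd : ∀ s, HasDerivAt φ (D s) s := by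
      intro s
      have h1 : HasDerivAt (fun s : ℝ => C' * (s - t₀)) C' s := by
        simpa using ((hasDerivAt_id s).sub_const t₀).const_mul C'
      have h2 : HasDerivAt (fun s : ℝ => (C' + 1) * (s - t₀)) (C' + 1) s := by
        simpa using ((hasDerivAt_id s).sub_const t₀).const_mul (C' + 1)
      exact (((h1.exp).const_mul A).add ((h2.exp).const_mul ε)).sub_const 1
    by_contra hcon
    push_neg at hcon
    obtain ⟨s₁, hs₁, x₁, hx₁⟩ := hcon
    -- the touching set
    set T : Set (ℝ × ℝ) :=
      (Icc 0 (2 * π) ×ˢ Icc t₀ t₁) ∩ {p : ℝ × ℝ | φ p.2 ≤ f p.1 p.2} with hT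
    have hφc : Continuous φ := continuous_iff_continuousAt.2 fun s => (hφd s).continuousAt
    have hTclosed : IsClosed T := by
      rw [← closure_subset_iff_isClosed]
      intro p hp
      have hpK : p ∈ Icc 0 (2 * π) ×ˢ Icc t₀ t₁ :=
        (closure_minimal inter_subset_left ((isClosed_Icc).prod isClosed_Icc)) hp
      refine ⟨hpK, ?_⟩
      have hne : (𝓝[T] p).NeBot := mem_closure_iff_nhdsWithin_neBot.1 hp
      have hgc : ContinuousWithinAt (fun q : ℝ × ℝ => f q.1 q.2 - φ q.2) T p := by
        apply ContinuousWithinAt.mono _ (inter_subset_left.trans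
          (prod_mono (subset_univ _) subset_rfl))
        exact (hf_cont p ⟨trivial, hpK.2⟩).sub
          ((hφc.comp continuous_snd).continuousAt.continuousWithinAt)
      have hgt : Filter.Tendsto (fun q : ℝ × ℝ => f q.1 q.2 - φ q.2) (𝓝[T] p)
          (𝓝 (f p.1 p.2 - φ p.2)) := hgc
      have : 0 ≤ f p.1 p.2 - φ p.2 := by
        refine ge_of_tendsto hgt ?_
        filter_upwards [self_mem_nhdsWithin] with q hq
        simpa using hq.2
      simpa [Set.mem_setOf_eq] using by linarith
    have hTcomp : IsCompact T :=
      (isCompact_Icc.prod isCompact_Icc).of_isClosed_subset hTclosed inter_subset_left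
    have hScomp : IsCompact (Prod.snd '' T) := hTcomp.image continuous_snd
    set S : Set ℝ := Prod.snd '' T with hS
    have hSne : S.Nonempty := by
      obtain ⟨y₁, hy₁, hy₁eq⟩ := (hper s₁).exists_mem_Ico₀ hπ x₁
      refine ⟨s₁, ⟨(y₁, s₁), ⟨⟨Ico_subset_Icc_self hy₁, hs₁⟩, ?_⟩, rfl⟩⟩
      simp only [Set.mem_setOf_eq, hφ]
      rw [← hy₁eq]
      exact hx₁
    set ts : ℝ := sInf S with hts
    have htsS : ts ∈ S := hScomp.sInf_mem hSne
    obtain ⟨⟨xw, ts'⟩, hw, hweq⟩ := htsS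
    have hts' : ts' = ts := hweq
    subst hts'
    have htsI : ts ∈ Icc t₀ t₁ := hw.1.2
    have hwge : φ ts ≤ f xw ts := hw.2
    -- strict inequality before ts
    have hlow : ∀ s, t₀ ≤ s → s < ts → ∀ x, f x s < φ s := by
      intro s hs1 hs2 x
      by_contra hcon2
      push_neg at hcon2
      have hsI : s ∈ Icc t₀ t₁ := ⟨hs1, hs2.le.trans htsI.2⟩
      obtain ⟨y₀, hy₀, hyeq⟩ := (hper s).exists_mem_Ico₀ hπ x
      have hmemS : s ∈ S :=
        ⟨(y₀, s), ⟨⟨Ico_subset_Icc_self hy₀, hsI⟩, by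
          simpa [Set.mem_setOf_eq, ← hyeq] using hcon2⟩, rfl⟩
      exact absurd (csInf_le hScomp.bddBelow hmemS) (not_le.2 hs2)
    -- ts > t₀
    have ht₀lt : t₀ < ts := by
      rcases lt_or_eq_of_le htsI.1 with h | h
      · exact h
      · exfalso
        have h1 : f xw t₀ ≤ A - 1 := by
          have := hx₀'max xw
          rw [hiSup_t₀] at hA
          linarith
        have h2 : φ t₀ ≤ f xw t₀ := h.symm ▸ hwge
        have h3 : φ t₀ = A + ε - 1 := by simp [hφ]
        linarith
    -- argmax at time ts
    obtain ⟨xs, _, hxsmax⟩ := argmax ts htsI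
    have hgets : φ ts ≤ f xs ts := hwge.trans (hxsmax xw)
    -- neBot filter from the left
    have hneB : (𝓝[Ico t₀ ts] ts).NeBot := by
      apply mem_closure_iff_nhdsWithin_neBot.1
      rw [closure_Ico (ne_of_lt ht₀lt)]
      exact right_mem_Icc.2 ht₀lt.le
    have hIcoSub : Ico t₀ ts ⊆ Icc t₀ t₁ := fun s hs => ⟨hs.1, hs.2.le.trans htsI.2⟩
    -- f xs ts ≤ φ ts by continuity from the left
    have hlets : f xs ts ≤ φ ts := by
      have hc1 : ContinuousWithinAt (fun s => f xs s - φ s) (Ico t₀ ts) ts :=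
        ((hft xs ts htsI).continuousWithinAt.sub hφc.continuousAt.continuousWithinAt).mono hIcoSub
      have : f xs ts - φ ts ≤ 0 := by
        refine le_of_tendsto hc1 ?_
        filter_upwards [self_mem_nhdsWithin] with s hs
        have := hlow s hs.1 hs.2 xs
        linarith
      linarith
    have heq : f xs ts = φ ts := le_antisymm hlets hgets
    -- time derivative inequality at ts
    have hdw : HasDerivWithinAt (fun s => f xs s - φ s) (ft xs ts - D ts) (Ico t₀ ts) ts :=
      ((hft xs ts htsI).sub (hφd ts).hasDerivWithinAt).mono hIcoSub
    rw [hasDerivWithinAt_iff_tendsto_slope] at hdw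
    have hdiffset : Ico t₀ ts \ {ts} = Ico t₀ ts := by
      apply diff_singleton_eq_self
      simp [lt_irrefl]
    rw [hdiffset] at hdw
    have h1 : 0 ≤ ft xs ts - D ts := by
      refine ge_of_tendsto hdw ?_
      filter_upwards [self_mem_nhdsWithin] with s hs
      rw [slope_def_field]
      have hnum : f xs s - φ s - (f xs ts - φ ts) ≤ 0 := by
        have := hlow s hs.1 hs.2 xs
        linarith [heq]
      have hden : s - ts ≤ 0 := by linarith [hs.2]
      exact div_nonneg_of_nonpos (by linarith) hden
    -- space derivatives at maximum
    obtain ⟨hfx0, hfxx0⟩ := aux_max_second (fun x => f x ts) (fun x => fx x ts) xs (fxx xs ts)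
      (hfx ts htsI) (hfxx ts htsI xs) hxsmax
    -- combine
    have h2 := hineq xs ts htsI
    rw [hfx0, heq] at h2
    have hkey : C' * (φ ts + 1) < D ts := by
      have he1 : 0 < Real.exp ((C' + 1) * (ts - t₀)) := Real.exp_pos _
      simp only [hφ, hD]
      nlinarith
    have : ft xs ts ≤ C' * (φ ts + 1) := by linarith
    linarith
  -- conclude from key by letting ε → 0
  intro t htI
  have hsup : (⨆ x, f x t) ≤ A * Real.exp (C' * (t - t₀)) - 1 := by
    apply ciSup_le
    intro x
    by_contra hcon
    push_neg at hcon
    set e₁ : ℝ := Real.exp ((C' + 1) * (t - t₀)) with he₁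
    have he₁pos : 0 < e₁ := Real.exp_pos _
    set X : ℝ := f x t - (A * Real.exp (C' * (t - t₀)) - 1) with hX
    have hXpos : 0 < X := by simp [hX]; linarith
    have := key (X / e₁) (div_pos hXpos he₁pos) t htI x
    rw [div_mul_cancel₀ _ (ne_of_gt he₁pos)] at this
    simp [hX] at this
    linarith
  calc (⨆ x, f x t) + 1 ≤ A * Real.exp (C' * (t - t₀)) := by linarith
    _ = ((⨆ x, f x t₀) + 1) * Real.exp (C' * (t - t₀)) := by rw [hA]
end
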